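/- For every y = (y₁,y₂;y₃,y₄) ∈ ℚ_p^{2×2} the following two identities hold: (i) σ(y₂)·σ(y₄)·Σ_{a ∈ ℤ_p/pℤ_p} σ(p^{−1}(y₁+a·y₂))·σ(p^{−1}(y₃+a·y₄)) = [0,0,0,0](y)·σ(p^{−1}·det y) + p·[1,1,1,1](y) − [0,1,0,1](y); (ii) σ(p·y₂)·σ(p·y₄)·Σ_{a ∈ ℤ_p/pℤ_p} σ(y₁+a·y₂)·σ(y₃+a·y₄) = [−1,−1,−1,−1](y)·σ(p·det y) + p·[0,0,0,0](y) − [−1,0,−1,0](y). -/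

import Mathlib

noncomputable section
open scoped Classical

/-- The characteristic function σ of ℤ_p inside ℚ_p: `σ(x) = 1` if `x ∈ ℤ_p`, else 0. -/
def pind {p : ℕ} [Fact p.Prime] (x : ℚ_[p]) : ℝ := if ‖x‖ ≤ 1 then 1 else 0

/-- `[i₁,i₂,i₃,i₄](y) = σ(p^{−i₁}y₁)·σ(p^{−i₂}y₂)·σ(p^{−i₃}y₃)·σ(p^{−i₄}y₄)`. -/
def brk {p : ℕ} [Fact p.Prime] (i₁ i₂ i₃ i₄ : ℤ) (y₁ y₂ y₃ y₄ : ℚ_[p]) : ℝ :=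
  pind ((p : ℚ_[p]) ^ (-i₁) * y₁) * pind ((p : ℚ_[p]) ^ (-i₂) * y₂)
    * pind ((p : ℚ_[p]) ^ (-i₃) * y₃) * pind ((p : ℚ_[p]) ^ (-i₄) * y₄)

namespace S12
variable {p : ℕ} [hp : Fact p.Prime]

lemma pind_one {x : ℚ_[p]} (h : ‖x‖ ≤ 1) : pind x = 1 := if_pos h
lemma pind_zero {x : ℚ_[p]} (h : ¬ ‖x‖ ≤ 1) : pind x = 0 := if_neg h

lemma add_le_one {x z : ℚ_[p]} (hx : ‖x‖ ≤ 1) (hz : ‖z‖ ≤ 1) : ‖x + z‖ ≤ 1 :=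
  le_trans (Padic.nonarchimedean x z) (max_le hx hz)

lemma sub_le_one {x z : ℚ_[p]} (hx : ‖x‖ ≤ 1) (hz : ‖z‖ ≤ 1) : ‖x - z‖ ≤ 1 := by
  rw [sub_eq_add_neg]; exact add_le_one hx (by simpa using hz)

lemma pind_add_right {x z : ℚ_[p]} (hz : ‖z‖ ≤ 1) : pind (x + z) = pind x := by
  by_cases hx : ‖x‖ ≤ 1
  · rw [pind_one hx, pind_one (add_le_one hx hz)]
  · rw [pind_zero hx, pind_zero]
    intro h
    exact hx (by simpa using sub_le_one h hz)

lemma norm_nat_le_one (a : ℕ) : ‖(a : ℚ_[p])‖ ≤ 1 := by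
  simpa using Padic.norm_int_le_one (p := p) a

lemma one_lt_p : (1:ℝ) < p := mod_cast hp.out.one_lt
lemma p_pos : (0:ℝ) < p := lt_trans one_pos one_lt_p

lemma norm_p_mul (x : ℚ_[p]) : ‖(p:ℚ_[p]) * x‖ = (p:ℝ)⁻¹ * ‖x‖ := by
  rw [norm_mul, Padic.norm_p]

lemma p_mul_le_one {x : ℚ_[p]} (h : ‖x‖ ≤ 1) : ‖(p:ℚ_[p]) * x‖ ≤ 1 := by
  rw [norm_p_mul]
  calc (p:ℝ)⁻¹ * ‖x‖ ≤ 1 * 1 := by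
        apply mul_le_mul _ h (norm_nonneg _) zero_le_one
        exact inv_le_one_of_one_le₀ one_lt_p.le
    _ = 1 := by ring

lemma le_inv_of_lt_one {x : ℚ_[p]} (h : ‖x‖ < 1) : ‖x‖ ≤ (p:ℝ)⁻¹ := by
  rcases eq_or_ne x 0 with rfl | hx
  · simp
  · rw [Padic.norm_eq_zpow_neg_valuation hx] at h ⊢
    rw [show ((p:ℝ)⁻¹ = (p:ℝ) ^ (-1 : ℤ)) by simp]
    rw [show ((1:ℝ) = (p:ℝ) ^ (0 : ℤ)) by simp] at h
    have := (zpow_lt_zpow_iff_right₀ one_lt_p).mp h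
    exact (zpow_le_zpow_iff_right₀ one_lt_p).mpr (by omega)

lemma exists_res (t : ℚ_[p]) (ht : ‖t‖ ≤ 1) : ∃ a : ℕ, a < p ∧ ‖t + a‖ ≤ (p:ℝ)⁻¹ := by
  have hmt : ‖(-t)‖ ≤ 1 := by simpa using ht
  obtain ⟨n, hn, hmem⟩ := PadicInt.exists_mem_range (p := p) ⟨-t, hmt⟩
  refine ⟨n, hn, ?_⟩
  rw [PadicInt.maximalIdeal_eq_span_p, Ideal.mem_span_singleton, ← PadicInt.norm_lt_one_iff_dvd] at hmem
  have : ‖((⟨-t, hmt⟩ - n : ℤ_[p]) : ℚ_[p])‖ < 1 := hmem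
  have h2 : ‖-t - n‖ < 1 := by
    exact this
  have : ‖t + n‖ = ‖-t - n‖ := by rw [show (-t - (n:ℚ_[p])) = -(t + n) by ring, norm_neg]
  rw [this]
  exact le_inv_of_lt_one h2

lemma res_unique {t : ℚ_[p]} {a b : ℕ} (ha : a < p) (hb : b < p)
    (h1 : ‖t + a‖ ≤ (p:ℝ)⁻¹) (h2 : ‖t + b‖ ≤ (p:ℝ)⁻¹) : a = b := by
  have hd : ‖((a:ℤ) - b : ℤ) • (1:ℚ_[p])‖ < 1 := by
    have : (((a:ℤ) - b : ℤ) : ℚ_[p]) = (t + (a:ℚ_[p])) - (t + (b:ℚ_[p])) := by push_cast; ring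
    rw [zsmul_eq_mul, mul_one, this]
    calc ‖(t + (a:ℚ_[p])) - (t + (b:ℚ_[p]))‖ ≤ max ‖t + (a:ℚ_[p])‖ ‖t + (b:ℚ_[p])‖ := by
          have h := Padic.nonarchimedean (t + (a:ℚ_[p])) (-(t + (b:ℚ_[p])))
          rw [norm_neg] at h
          simpa [sub_eq_add_neg] using h
      _ ≤ (p:ℝ)⁻¹ := max_le h1 h2
      _ < 1 := inv_lt_one_of_one_lt₀ one_lt_p
  rw [zsmul_eq_mul, mul_one] at hd
  rw [Padic.norm_intCast_lt_one_iff] at hd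
  have := Int.eq_zero_of_abs_lt_dvd hd (by rw [abs_sub_lt_iff]; constructor <;> omega)
  omega

end S12

namespace S12
variable {p : ℕ} [hp : Fact p.Prime]

lemma key (y₁ y₂ y₃ y₄ : ℚ_[p]) :
    pind ((p:ℚ_[p]) * y₂) * pind ((p:ℚ_[p]) * y₄) *
        ∑ a ∈ Finset.range p, pind (y₁ + (a:ℚ_[p]) * y₂) * pind (y₃ + (a:ℚ_[p]) * y₄)
      = pind ((p:ℚ_[p])*y₁) * pind ((p:ℚ_[p])*y₂) * pind ((p:ℚ_[p])*y₃) * pind ((p:ℚ_[p])*y₄)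
          * pind ((p:ℚ_[p]) * (y₁*y₄ - y₂*y₃))
        + (p:ℝ) * (pind y₁ * pind y₂ * pind y₃ * pind y₄)
        - pind ((p:ℚ_[p])*y₁) * pind y₂ * pind ((p:ℚ_[p])*y₃) * pind y₄ := by
  by_cases h2 : ‖(p:ℚ_[p]) * y₂‖ ≤ 1
  swap
  · have h2' : ¬ ‖y₂‖ ≤ 1 := fun h => h2 (p_mul_le_one h)
    rw [pind_zero h2, pind_zero h2']; ring
  by_cases h4 : ‖(p:ℚ_[p]) * y₄‖ ≤ 1
  swap
  · have h4' : ¬ ‖y₄‖ ≤ 1 := fun h => h4 (p_mul_le_one h)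
    rw [pind_zero h4, pind_zero h4']; ring
  rw [pind_one h2, pind_one h4]
  by_cases hy4 : ‖y₄‖ ≤ 1
  · by_cases hy2 : ‖y₂‖ ≤ 1
    · -- Case B
      have hsum : ∑ a ∈ Finset.range p,
          pind (y₁ + (a:ℚ_[p]) * y₂) * pind (y₃ + (a:ℚ_[p]) * y₄)
          = (p:ℝ) * (pind y₁ * pind y₃) := by
        rw [Finset.sum_congr rfl (fun a _ => ?_), Finset.sum_const, Finset.card_range,
          nsmul_eq_mul]
        rw [pind_add_right (show ‖(a:ℚ_[p]) * y₂‖ ≤ 1 by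
            rw [norm_mul]; exact mul_le_one₀ (norm_nat_le_one a) (norm_nonneg _) hy2),
          pind_add_right (show ‖(a:ℚ_[p]) * y₄‖ ≤ 1 by
            rw [norm_mul]; exact mul_le_one₀ (norm_nat_le_one a) (norm_nonneg _) hy4)]
      rw [hsum, pind_one hy2, pind_one hy4]
      have hkey : pind ((p:ℚ_[p])*y₁) * pind ((p:ℚ_[p])*y₃)
          * pind ((p:ℚ_[p]) * (y₁*y₄ - y₂*y₃))
          = pind ((p:ℚ_[p])*y₁) * pind ((p:ℚ_[p])*y₃) := by
        by_cases hq1 : ‖(p:ℚ_[p])*y₁‖ ≤ 1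
        · by_cases hq3 : ‖(p:ℚ_[p])*y₃‖ ≤ 1
          · have hd : ‖(p:ℚ_[p]) * (y₁*y₄ - y₂*y₃)‖ ≤ 1 := by
              have e : (p:ℚ_[p]) * (y₁*y₄ - y₂*y₃)
                  = ((p:ℚ_[p])*y₁) * y₄ - y₂ * ((p:ℚ_[p])*y₃) := by ring
              rw [e]
              exact sub_le_one
                (by rw [norm_mul]; exact mul_le_one₀ hq1 (norm_nonneg _) hy4)
                (by rw [norm_mul]; exact mul_le_one₀ hy2 (norm_nonneg _) hq3)
            rw [pind_one hd]; ring
          · rw [pind_zero hq3]; ring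
        · rw [pind_zero hq1]; ring
      linear_combination -hkey
    · -- Case D : ‖y₄‖ ≤ 1, ‖y₂‖ > 1
      have h2eq : ‖(p:ℚ_[p]) * y₂‖ = 1 := by
        refine le_antisymm h2 ?_
        by_contra hlt
        push_neg at hlt
        have := le_inv_of_lt_one hlt
        rw [norm_p_mul] at this
        apply hy2
        have hp0 := p_pos (p := p)
        have h'' := mul_le_mul_of_nonneg_left this hp0.le
        rwa [← mul_assoc, mul_inv_cancel₀ hp0.ne', one_mul] at h''
      have hy2n : ‖y₂‖ = (p:ℝ) := by
        have := h2eq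
        rw [norm_p_mul] at this
        have hp0 := p_pos (p := p)
        field_simp at this
        linarith
      have hy20 : y₂ ≠ 0 := by
        intro h; rw [h, norm_zero] at hy2n; exact absurd hy2n.symm (ne_of_gt (p_pos))
      by_cases h1 : ‖(p:ℚ_[p]) * y₁‖ ≤ 1
      · set t : ℚ_[p] := y₁ / y₂ with htdef
        have ht : ‖t‖ ≤ 1 := by
          rw [htdef, norm_div, hy2n]
          rw [norm_p_mul] at h1
          rw [div_le_one p_pos]
          have hp0 := p_pos (p := p)
          have h'' := mul_le_mul_of_nonneg_left h1 hp0.le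
          rwa [← mul_assoc, mul_inv_cancel₀ hp0.ne', one_mul, mul_one] at h''
        obtain ⟨a₀, ha₀p, ha₀⟩ := exists_res t ht
        have hK : ∀ a : ℕ, (‖y₁ + (a:ℚ_[p]) * y₂‖ ≤ 1 ↔ ‖t + (a:ℚ_[p])‖ ≤ (p:ℝ)⁻¹) := by
          intro a
          have e : y₁ + (a:ℚ_[p]) * y₂ = y₂ * (t + (a:ℚ_[p])) := by
            rw [htdef]; field_simp
          rw [e, norm_mul, hy2n, mul_comm, ← le_div_iff₀ p_pos, one_div]
        have h14 : ‖y₁ + (a₀:ℚ_[p]) * y₂‖ ≤ 1 := (hK a₀).mpr ha₀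
        have hsum : ∑ a ∈ Finset.range p,
            pind (y₁ + (a:ℚ_[p]) * y₂) * pind (y₃ + (a:ℚ_[p]) * y₄)
            = pind (y₃ + (a₀:ℚ_[p]) * y₄) := by
          rw [Finset.sum_eq_single a₀]
          · rw [pind_one h14, one_mul]
          · intro a ha hne
            rw [pind_zero, zero_mul]
            intro hc
            exact hne (res_unique (Finset.mem_range.mp ha) ha₀p ((hK a).mp hc) ha₀)
          · intro h; exact absurd (Finset.mem_range.mpr ha₀p) h
        have ha₀y₄ : ‖(a₀:ℚ_[p]) * y₄‖ ≤ 1 := by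
          rw [norm_mul]; exact mul_le_one₀ (norm_nat_le_one a₀) (norm_nonneg _) hy4
        rw [hsum, pind_add_right ha₀y₄, pind_zero hy2, pind_one h1]
        by_cases hy3 : ‖y₃‖ ≤ 1
        · have h34 : ‖y₃ + (a₀:ℚ_[p]) * y₄‖ ≤ 1 := add_le_one hy3 ha₀y₄
          have hd : ‖(p:ℚ_[p]) * (y₁*y₄ - y₂*y₃)‖ ≤ 1 := by
            have e : (p:ℚ_[p]) * (y₁*y₄ - y₂*y₃)
                = ((p:ℚ_[p])*y₄) * (y₁ + (a₀:ℚ_[p])*y₂)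
                  - ((p:ℚ_[p])*y₂) * (y₃ + (a₀:ℚ_[p])*y₄) := by ring
            rw [e]
            exact sub_le_one
              (by rw [norm_mul]; exact mul_le_one₀ h4 (norm_nonneg _) h14)
              (by rw [norm_mul, h2eq, one_mul]; exact h34)
          rw [pind_one hy3, pind_one (p_mul_le_one hy3), pind_one hd]
          ring
        · rw [pind_zero hy3]
          by_cases hq3 : ‖(p:ℚ_[p])*y₃‖ ≤ 1
          · have hd : ¬ ‖(p:ℚ_[p]) * (y₁*y₄ - y₂*y₃)‖ ≤ 1 := by
              intro hd
              apply hy3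
              have e : ((p:ℚ_[p])*y₂) * (y₃ + (a₀:ℚ_[p])*y₄)
                  = ((p:ℚ_[p])*y₄) * (y₁ + (a₀:ℚ_[p])*y₂)
                    - (p:ℚ_[p]) * (y₁*y₄ - y₂*y₃) := by ring
              have hn : ‖((p:ℚ_[p])*y₂) * (y₃ + (a₀:ℚ_[p])*y₄)‖ ≤ 1 := by
                rw [e]
                exact sub_le_one
                  (by rw [norm_mul]; exact mul_le_one₀ h4 (norm_nonneg _) h14) hd
              rw [norm_mul, h2eq, one_mul] at hn
              have e2 : y₃ = (y₃ + (a₀:ℚ_[p])*y₄) - (a₀:ℚ_[p])*y₄ := by ring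
              rw [e2]
              exact sub_le_one hn ha₀y₄
            rw [pind_zero hd]; ring
          · rw [pind_zero hq3]; ring
      · have hz : ∀ a ∈ Finset.range p,
            pind (y₁ + (a:ℚ_[p]) * y₂) * pind (y₃ + (a:ℚ_[p]) * y₄) = 0 := by
          intro a _
          rw [pind_zero, zero_mul]
          intro hc
          apply h1
          rw [norm_p_mul]
          have hay : ‖(a:ℚ_[p]) * y₂‖ ≤ (p:ℝ) := by
            rw [norm_mul, hy2n]
            nlinarith [norm_nat_le_one (p := p) a, p_pos (p := p),
              norm_nonneg ((a:ℚ_[p]))]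
          have hb : ‖y₁‖ ≤ (p:ℝ) := by
            have h' := Padic.nonarchimedean (y₁ + (a:ℚ_[p])*y₂) (-((a:ℚ_[p])*y₂))
            rw [norm_neg] at h'
            simp only [add_neg_cancel_right] at h'
            calc ‖y₁‖ ≤ max ‖y₁ + (a:ℚ_[p])*y₂‖ ‖(a:ℚ_[p])*y₂‖ := h'
              _ ≤ (p:ℝ) := max_le (le_trans hc (one_lt_p).le) hay
          have hp0 := p_pos (p := p)
          calc (p:ℝ)⁻¹ * ‖y₁‖ ≤ (p:ℝ)⁻¹ * (p:ℝ) := by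
                apply mul_le_mul_of_nonneg_left hb (by positivity)
            _ = 1 := by field_simp
        rw [Finset.sum_eq_zero hz, pind_zero h1, pind_zero hy2]; ring
  · -- Case C : ‖y₄‖ > 1
    have h4eq : ‖(p:ℚ_[p]) * y₄‖ = 1 := by
      refine le_antisymm h4 ?_
      by_contra hlt
      push_neg at hlt
      have := le_inv_of_lt_one hlt
      rw [norm_p_mul] at this
      apply hy4
      have hp0 := p_pos (p := p)
      have h'' := mul_le_mul_of_nonneg_left this hp0.le
      rwa [← mul_assoc, mul_inv_cancel₀ hp0.ne', one_mul] at h''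
    have hy4n : ‖y₄‖ = (p:ℝ) := by
      have := h4eq
      rw [norm_p_mul] at this
      have hp0 := p_pos (p := p)
      field_simp at this
      linarith
    have hy40 : y₄ ≠ 0 := by
      intro h; rw [h, norm_zero] at hy4n; exact absurd hy4n.symm (ne_of_gt (p_pos))
    by_cases h3 : ‖(p:ℚ_[p]) * y₃‖ ≤ 1
    · set t : ℚ_[p] := y₃ / y₄ with htdef
      have ht : ‖t‖ ≤ 1 := by
        rw [htdef, norm_div, hy4n]
        rw [norm_p_mul] at h3
        rw [div_le_one p_pos]
        have hp0 := p_pos (p := p)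
        have h'' := mul_le_mul_of_nonneg_left h3 hp0.le
        rwa [← mul_assoc, mul_inv_cancel₀ hp0.ne', one_mul, mul_one] at h''
      obtain ⟨a₀, ha₀p, ha₀⟩ := exists_res t ht
      have hK : ∀ a : ℕ, (‖y₃ + (a:ℚ_[p]) * y₄‖ ≤ 1 ↔ ‖t + (a:ℚ_[p])‖ ≤ (p:ℝ)⁻¹) := by
        intro a
        have e : y₃ + (a:ℚ_[p]) * y₄ = y₄ * (t + (a:ℚ_[p])) := by
          rw [htdef]; field_simp
        rw [e, norm_mul, hy4n, mul_comm, ← le_div_iff₀ p_pos, one_div]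
      have h34 : ‖y₃ + (a₀:ℚ_[p]) * y₄‖ ≤ 1 := (hK a₀).mpr ha₀
      have hsum : ∑ a ∈ Finset.range p,
          pind (y₁ + (a:ℚ_[p]) * y₂) * pind (y₃ + (a:ℚ_[p]) * y₄)
          = pind (y₁ + (a₀:ℚ_[p]) * y₂) := by
        rw [Finset.sum_eq_single a₀]
        · rw [pind_one h34, mul_one]
        · intro a ha hne
          have h0 : pind (y₃ + (a:ℚ_[p]) * y₄) = 0 :=
            pind_zero fun hc => hne (res_unique (Finset.mem_range.mp ha) ha₀p ((hK a).mp hc) ha₀)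
          rw [h0, mul_zero]
        · intro h; exact absurd (Finset.mem_range.mpr ha₀p) h
      rw [hsum, pind_zero hy4, pind_one h3]
      by_cases hA : ‖y₁ + (a₀:ℚ_[p]) * y₂‖ ≤ 1
      · have hd : ‖(p:ℚ_[p]) * (y₁*y₄ - y₂*y₃)‖ ≤ 1 := by
          have e : (p:ℚ_[p]) * (y₁*y₄ - y₂*y₃)
              = ((p:ℚ_[p])*y₄) * (y₁ + (a₀:ℚ_[p])*y₂)
                - ((p:ℚ_[p])*y₂) * (y₃ + (a₀:ℚ_[p])*y₄) := by ring
          rw [e]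
          exact sub_le_one
            (by rw [norm_mul, h4eq, one_mul]; exact hA)
            (by rw [norm_mul]; exact mul_le_one₀ h2 (norm_nonneg _) h34)
        have hq1 : ‖(p:ℚ_[p]) * y₁‖ ≤ 1 := by
          have e : (p:ℚ_[p]) * y₁
              = (p:ℚ_[p]) * (y₁ + (a₀:ℚ_[p])*y₂) - (a₀:ℚ_[p]) * ((p:ℚ_[p])*y₂) := by ring
          rw [e]
          exact sub_le_one (p_mul_le_one hA)
            (by rw [norm_mul]; exact mul_le_one₀ (norm_nat_le_one a₀) (norm_nonneg _) h2)
        rw [pind_one hA, pind_one hd, pind_one hq1]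
        ring
      · rw [pind_zero hA]
        by_cases hd : ‖(p:ℚ_[p]) * (y₁*y₄ - y₂*y₃)‖ ≤ 1
        · exfalso
          apply hA
          have e : ((p:ℚ_[p])*y₄) * (y₁ + (a₀:ℚ_[p])*y₂)
              = (p:ℚ_[p]) * (y₁*y₄ - y₂*y₃)
                + ((p:ℚ_[p])*y₂) * (y₃ + (a₀:ℚ_[p])*y₄) := by ring
          have hn : ‖((p:ℚ_[p])*y₄) * (y₁ + (a₀:ℚ_[p])*y₂)‖ ≤ 1 := by
            rw [e]
            exact add_le_one hd
              (by rw [norm_mul]; exact mul_le_one₀ h2 (norm_nonneg _) h34)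
          rwa [norm_mul, h4eq, one_mul] at hn
        · rw [pind_zero hd]; ring
    · have hz : ∀ a ∈ Finset.range p,
          pind (y₁ + (a:ℚ_[p]) * y₂) * pind (y₃ + (a:ℚ_[p]) * y₄) = 0 := by
        intro a _
        have h0 : pind (y₃ + (a:ℚ_[p]) * y₄) = 0 := by
          apply pind_zero
          intro hc
          apply h3
          rw [norm_p_mul]
          have hay : ‖(a:ℚ_[p]) * y₄‖ ≤ (p:ℝ) := by
            rw [norm_mul, hy4n]
            nlinarith [norm_nat_le_one (p := p) a, p_pos (p := p),
              norm_nonneg ((a:ℚ_[p]))]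
          have hb : ‖y₃‖ ≤ (p:ℝ) := by
            have h' := Padic.nonarchimedean (y₃ + (a:ℚ_[p])*y₄) (-((a:ℚ_[p])*y₄))
            rw [norm_neg] at h'
            simp only [add_neg_cancel_right] at h'
            calc ‖y₃‖ ≤ max ‖y₃ + (a:ℚ_[p])*y₄‖ ‖(a:ℚ_[p])*y₄‖ := h'
              _ ≤ (p:ℝ) := max_le (le_trans hc (one_lt_p).le) hay
          have hp0 := p_pos (p := p)
          calc (p:ℝ)⁻¹ * ‖y₃‖ ≤ (p:ℝ)⁻¹ * (p:ℝ) := by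
                apply mul_le_mul_of_nonneg_left hb (by positivity)
            _ = 1 := by field_simp
        rw [h0, mul_zero]
      rw [Finset.sum_eq_zero hz, pind_zero h3, pind_zero hy4]; ring

end S12

/-- for y = (y₁,y₂;y₃,y₄) ∈ ℚ_p^{2×2} with det y = y₁y₄ − y₂y₃,
(i) `σ(y₂)·σ(y₄)·Σ_{a ∈ ℤ_p/pℤ_p} σ(p⁻¹(y₁+ay₂))·σ(p⁻¹(y₃+ay₄))
     = [0,0,0,0](y)·σ(p⁻¹·det y) + p·[1,1,1,1](y) − [0,1,0,1](y)`;
(ii) `σ(py₂)·σ(py₄)·Σ_{a ∈ ℤ_p/pℤ_p} σ(y₁+ay₂)·σ(y₃+ay₄)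
     = [−1,−1,−1,−1](y)·σ(p·det y) + p·[0,0,0,0](y) − [−1,0,−1,0](y)`. -/
theorem stmt12 (p : ℕ) [Fact p.Prime] (y₁ y₂ y₃ y₄ : ℚ_[p]) :
    (pind y₂ * pind y₄ *
        ∑ a ∈ Finset.range p,
          pind ((p : ℚ_[p])⁻¹ * (y₁ + (a : ℚ_[p]) * y₂))
            * pind ((p : ℚ_[p])⁻¹ * (y₃ + (a : ℚ_[p]) * y₄))
      = brk 0 0 0 0 y₁ y₂ y₃ y₄ * pind ((p : ℚ_[p])⁻¹ * (y₁ * y₄ - y₂ * y₃))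
          + (p : ℝ) * brk 1 1 1 1 y₁ y₂ y₃ y₄ - brk 0 1 0 1 y₁ y₂ y₃ y₄) ∧
    (pind ((p : ℚ_[p]) * y₂) * pind ((p : ℚ_[p]) * y₄) *
        ∑ a ∈ Finset.range p,
          pind (y₁ + (a : ℚ_[p]) * y₂) * pind (y₃ + (a : ℚ_[p]) * y₄)
      = brk (-1) (-1) (-1) (-1) y₁ y₂ y₃ y₄ * pind ((p : ℚ_[p]) * (y₁ * y₄ - y₂ * y₃))
          + (p : ℝ) * brk 0 0 0 0 y₁ y₂ y₃ y₄ - brk (-1) 0 (-1) 0 y₁ y₂ y₃ y₄) := by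
  have hp0 : (p:ℚ_[p]) ≠ 0 := Nat.cast_ne_zero.mpr (Fact.out (p := p.Prime)).ne_zero
  constructor
  · have h := S12.key (p:=p) ((p:ℚ_[p])⁻¹ * y₁) ((p:ℚ_[p])⁻¹ * y₂) ((p:ℚ_[p])⁻¹ * y₃)
      ((p:ℚ_[p])⁻¹ * y₄)
    have e1 : ∀ x : ℚ_[p], (p:ℚ_[p]) * ((p:ℚ_[p])⁻¹ * x) = x := fun x => by
      field_simp
    have e2 : ∀ (a : ℕ) (x z : ℚ_[p]),
        (p:ℚ_[p])⁻¹ * x + (a:ℚ_[p]) * ((p:ℚ_[p])⁻¹ * z) = (p:ℚ_[p])⁻¹ * (x + (a:ℚ_[p]) * z) :=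
      fun a x z => by ring
    have e3 : ((p:ℚ_[p])⁻¹ * y₁) * ((p:ℚ_[p])⁻¹ * y₄) - ((p:ℚ_[p])⁻¹ * y₂) * ((p:ℚ_[p])⁻¹ * y₃)
        = (p:ℚ_[p])⁻¹ * ((p:ℚ_[p])⁻¹ * (y₁*y₄ - y₂*y₃)) := by ring
    rw [e3] at h
    simp only [e1, e2] at h
    simpa [brk] using h
  · have h := S12.key (p:=p) y₁ y₂ y₃ y₄
    simpa [brk] using h
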